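/- Let a₁, a₂, γ ∈ ℂ and let s ∈ ℂ satisfy s² = a₁a₂. Define η(t) = (γ − s/2)e^{t} + (γ + s/2)e^{−t} − 2γ, and on any open subset U of ℂ (or open real interval) on which η has no zeros set δ₁(t) = a₁ e^{−t}/η(t), δ₂(t) = a₂ e^{t}/η(t), and c(t) = η′(t)/η(t). Then the triple (δ₁, δ₂, c) solves the co-moving expression-parameter system: dδ₁/dt = −δ₁(c+1), dδ₂/dt = −δ₂(c−1), and dc/dt = −½(δ₁δ₂ + c² − 1) on U. -/

import Mathlib

open Complex

set_option maxHeartbeats 1000000 in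
/-- For `a₁, a₂, γ ∈ ℂ` and `s` with `s² = a₁a₂`, set
`η(t) = (γ − s/2)e^t + (γ + s/2)e^{−t} − 2γ`, and on an open set `U` where `η ≠ 0` put
`δ₁(t) = a₁e^{−t}/η(t)`, `δ₂(t) = a₂e^t/η(t)`, `c(t) = η'(t)/η(t)`.  Then `(δ₁, δ₂, c)`
solves the co-moving expression-parameter system
`δ₁' = −δ₁(c+1)`, `δ₂' = −δ₂(c−1)`, `c' = −½(δ₁δ₂ + c² − 1)` on `U`. -/
theorem statement19 (a₁ a₂ γ s : ℂ) (hs : s ^ 2 = a₁ * a₂)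
    (η : ℂ → ℂ)
    (hη : ∀ t, η t = (γ - s / 2) * exp t + (γ + s / 2) * exp (-t) - 2 * γ)
    (U : Set ℂ) (hU : IsOpen U) (hηne : ∀ t ∈ U, η t ≠ 0)
    (δ₁ δ₂ c : ℂ → ℂ)
    (hδ₁ : ∀ t, δ₁ t = a₁ * exp (-t) / η t)
    (hδ₂ : ∀ t, δ₂ t = a₂ * exp t / η t)
    (hc : ∀ t, c t = deriv η t / η t) :
    ∀ t ∈ U,
      HasDerivAt δ₁ (-(δ₁ t) * (c t + 1)) t ∧
      HasDerivAt δ₂ (-(δ₂ t) * (c t - 1)) t ∧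
      HasDerivAt c (-(1 / 2) * (δ₁ t * δ₂ t + (c t) ^ 2 - 1)) t := by
  have hηeq : η = fun t => (γ - s / 2) * exp t + (γ + s / 2) * exp (-t) - 2 * γ :=
    funext hη
  subst hηeq
  have hexpneg : ∀ t : ℂ, HasDerivAt (fun t : ℂ => exp (-t)) (-exp (-t)) t := by
    intro t
    simpa using (hasDerivAt_neg t).cexp
  have hD : ∀ t : ℂ, HasDerivAt (fun t => (γ - s / 2) * exp t + (γ + s / 2) * exp (-t) - 2 * γ)
      ((γ - s / 2) * exp t - (γ + s / 2) * exp (-t)) t := by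
    intro t
    have := (((Complex.hasDerivAt_exp t).const_mul (γ - s / 2)).add
      ((hexpneg t).const_mul (γ + s / 2))).sub_const (2 * γ)
    convert this using 1 <;> try rfl
    ring
  have hderiv : ∀ t : ℂ, deriv (fun t => (γ - s / 2) * exp t + (γ + s / 2) * exp (-t) - 2 * γ) t
      = (γ - s / 2) * exp t - (γ + s / 2) * exp (-t) := fun t => (hD t).deriv
  have hceq : c = fun t => ((γ - s / 2) * exp t - (γ + s / 2) * exp (-t)) /
      ((γ - s / 2) * exp t + (γ + s / 2) * exp (-t) - 2 * γ) := by
    funext t; rw [hc, hderiv]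
  have hδ₁eq : δ₁ = fun t => a₁ * exp (-t) /
      ((γ - s / 2) * exp t + (γ + s / 2) * exp (-t) - 2 * γ) := funext hδ₁
  have hδ₂eq : δ₂ = fun t => a₂ * exp t /
      ((γ - s / 2) * exp t + (γ + s / 2) * exp (-t) - 2 * γ) := funext hδ₂
  subst hceq hδ₁eq hδ₂eq
  intro t ht
  have hne := hηne t ht
  simp only at hne
  have he : exp t * exp (-t) = 1 := by rw [← exp_add]; simp
  have hex := Complex.exp_ne_zero t
  have hN2 : HasDerivAt (fun t => (γ - s / 2) * exp t - (γ + s / 2) * exp (-t))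
      ((γ - s / 2) * exp t + (γ + s / 2) * exp (-t)) t := by
    have := ((Complex.hasDerivAt_exp t).const_mul (γ - s / 2)).sub
      ((hexpneg t).const_mul (γ + s / 2))
    convert this using 1 <;> try rfl
    ring
  have hnum1 : HasDerivAt (fun t : ℂ => a₁ * exp (-t)) (-(a₁ * exp (-t))) t := by
    have := (hexpneg t).const_mul a₁
    (convert this using 1 <;> try rfl); ring
  have hnum2 : HasDerivAt (fun t : ℂ => a₂ * exp t) (a₂ * exp t) t :=
    (Complex.hasDerivAt_exp t).const_mul a₂
  set E : ℂ := (γ - s / 2) * exp t + (γ + s / 2) * exp (-t) - 2 * γ with hEdef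
  have hEi : E * E⁻¹ = 1 := mul_inv_cancel₀ hne
  refine ⟨?_, ?_, ?_⟩
  · have h := hnum1.div (hD t) hne
    convert h using 1 <;> try rfl
    rw [pow_two, ← div_div]
    linear_combination (a₁ * cexp (-t) * E⁻¹) * hEi
  · have h := hnum2.div (hD t) hne
    convert h using 1 <;> try rfl
    rw [pow_two, ← div_div]
    linear_combination (-(a₂ * cexp t * E⁻¹)) * hEi
  · have h := hN2.div (hD t) hne
    convert h using 1 <;> try rfl
    conv_rhs => rw [pow_two, ← div_div]
    linear_combination (-(1/2) * (E * E⁻¹ + 1)) * hEi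
      + (-(1/2) * a₁ * a₂ * E⁻¹^2 + (1/2) * (s^2 - 4*γ^2) * E⁻¹^2) * he
      + ((1/2) * E⁻¹^2) * hs
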